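/- For v ∈ ℚ^n, δ > 0, t > e^{1/g_2}, and t > ((n - μ_M)·g_2/(δ·μ_M))^{1/g_2}, one has 0 ≤ M - R_v(t) < δ, where M = max v, μ_M is the multiplicity of M, g_2 is the gap between M and the second largest distinct value of v (assume v has at least two distinct values), and R_v(t) = (∑_j v_j t^{v_j})/(∑_j t^{v_j}). -/

import Mathlib

open Real Finset

theorem stmt_10 (n : ℕ) (hn : 2 ≤ n) (v : Fin n → ℚ) (M : ℚ)
    (hM : IsGreatest (Set.range v) M)
    (μ : ℕ) (hμ : μ = (Finset.univ.filter (fun i => v i = M)).card)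
    (hS : (Finset.univ.filter (fun i => v i < M)).Nonempty)
    (g₂ : ℚ)
    (hg₂ : g₂ = M - (Finset.univ.filter (fun i => v i < M)).sup' hS v)
    (δ t : ℝ) (hδ : 0 < δ)
    (hte : Real.exp (1 / (g₂ : ℝ)) < t)
    (ht : (((n : ℝ) - μ) * (g₂ : ℝ) / (δ * μ)) ^ (1 / (g₂ : ℝ)) < t) :
    0 ≤ (M : ℝ) - (∑ j, (v j : ℝ) * t ^ (v j : ℝ)) / (∑ j, t ^ (v j : ℝ))
      ∧ (M : ℝ) - (∑ j, (v j : ℝ) * t ^ (v j : ℝ)) / (∑ j, t ^ (v j : ℝ)) < δ := by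
  -- basic facts
  have hle : ∀ j, v j ≤ M := fun j => hM.2 ⟨j, rfl⟩
  have hsup_lt : (Finset.univ.filter (fun i => v i < M)).sup' hS v < M := by
    rw [Finset.sup'_lt_iff]
    intro i hi
    exact (Finset.mem_filter.mp hi).2
  have hg₂pos : (0:ℚ) < g₂ := by rw [hg₂]; linarith
  have hg₂R : (0:ℝ) < (g₂:ℝ) := by exact_mod_cast hg₂pos
  have ht0 : (0:ℝ) < t := lt_trans (Real.exp_pos _) hte
  have hc : 1 / (g₂:ℝ) < Real.log t := (Real.lt_log_iff_exp_lt ht0).mpr hte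
  -- μ ≥ 1
  obtain ⟨i0, hi0⟩ := hM.1
  have hμpos : 0 < μ := by
    rw [hμ]
    exact Finset.card_pos.mpr ⟨i0, Finset.mem_filter.mpr ⟨Finset.mem_univ _, hi0⟩⟩
  have hμR : (0:ℝ) < (μ:ℝ) := by exact_mod_cast hμpos
  -- cardinality of the strict filter
  set k := (Finset.univ.filter (fun i => v i < M)).card with hk
  have hkpos : 0 < k := Finset.card_pos.mpr hS
  have hcard : k + μ = n := by
    have hfe : (Finset.univ.filter (fun i => v i < M)) = (Finset.univ.filter (fun i => ¬ v i = M)) := by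
      ext i
      simp only [Finset.mem_filter, Finset.mem_univ, true_and]
      exact ⟨fun h => ne_of_lt h, fun h => lt_of_le_of_ne (hle i) h⟩
    have h1 := Finset.card_filter_add_card_filter_not (s := (Finset.univ : Finset (Fin n))) (p := fun i => v i = M)
    have h2 : (Finset.univ : Finset (Fin n)).card = n := by simp
    rw [hμ, hk, hfe]
    omega
  have hkR : (k:ℝ) = (n:ℝ) - μ := by
    have := hcard
    push_cast [← this]
    ring
  -- denominator positivity
  set T := ∑ j, t ^ (v j : ℝ) with hT
  have hTpos : 0 < T := Finset.sum_pos (fun j _ => Real.rpow_pos_of_pos ht0 _) ⟨i0, Finset.mem_univ _⟩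
  -- key termwise bound
  have key : ∀ j, v j < M → ((M:ℝ) - v j) * t ^ ((v j : ℝ)) ≤ (g₂:ℝ) * t ^ ((M:ℝ) - g₂) := by
    intro j hj
    have hjs : v j ≤ (Finset.univ.filter (fun i => v i < M)).sup' hS v :=
      Finset.le_sup' v (Finset.mem_filter.mpr ⟨Finset.mem_univ _, hj⟩)
    have hx : (g₂:ℝ) ≤ (M:ℝ) - v j := by
      have : g₂ ≤ M - v j := by rw [hg₂]; linarith
      exact_mod_cast this
    have h2 : ((M:ℝ) - v j - g₂) / g₂ ≤ ((M:ℝ) - v j - g₂) * Real.log t := by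
      have := mul_le_mul_of_nonneg_left hc.le (by linarith : (0:ℝ) ≤ (M:ℝ) - v j - g₂)
      calc ((M:ℝ) - v j - g₂)/g₂ = ((M:ℝ) - v j - g₂) * (1/g₂) := by ring
        _ ≤ ((M:ℝ) - v j - g₂) * Real.log t := this
    have h1 : (M:ℝ) - v j ≤ (g₂:ℝ) * Real.exp (((M:ℝ) - v j - g₂) * Real.log t) := by
      calc (M:ℝ) - v j = (g₂:ℝ) * (((M:ℝ) - v j - g₂)/g₂ + 1) := by field_simp; ring
        _ ≤ (g₂:ℝ) * Real.exp (((M:ℝ) - v j - g₂)/g₂) :=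
            mul_le_mul_of_nonneg_left (Real.add_one_le_exp _) hg₂R.le
        _ ≤ (g₂:ℝ) * Real.exp (((M:ℝ) - v j - g₂) * Real.log t) :=
            mul_le_mul_of_nonneg_left (Real.exp_le_exp.mpr h2) hg₂R.le
    rw [Real.rpow_def_of_pos ht0, Real.rpow_def_of_pos ht0]
    have e : Real.exp (Real.log t * ((M:ℝ) - g₂))
        = Real.exp (((M:ℝ) - v j - g₂) * Real.log t) * Real.exp (Real.log t * (v j : ℝ)) := by
      rw [← Real.exp_add]
      congr 1
      ring
    rw [e, ← mul_assoc]
    exact mul_le_mul_of_nonneg_right h1 (Real.exp_pos _).le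
  -- numerator
  set S := ∑ j, (v j : ℝ) * t ^ (v j : ℝ) with hSdef
  set N := ∑ j, ((M:ℝ) - v j) * t ^ (v j : ℝ) with hN
  have hNeq : N = (M:ℝ) * T - S := by
    rw [hN, hSdef, hT, Finset.mul_sum, ← Finset.sum_sub_distrib]
    apply Finset.sum_congr rfl
    intro j _
    ring
  have hNnonneg : 0 ≤ N := Finset.sum_nonneg fun j _ => by
    have : (v j : ℝ) ≤ (M:ℝ) := by exact_mod_cast hle j
    exact mul_nonneg (by linarith) (Real.rpow_pos_of_pos ht0 _).le
  -- bound N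
  have hNfilter : N = ∑ j ∈ Finset.univ.filter (fun i => v i < M), ((M:ℝ) - v j) * t ^ (v j : ℝ) := by
    rw [hN]
    symm
    apply Finset.sum_filter_of_ne
    intro j _ hne
    by_contra h
    have hjM : v j = M := le_antisymm (hle j) (not_lt.mp h)
    apply hne
    rw [hjM]
    simp
  have hNle : N ≤ (k:ℝ) * ((g₂:ℝ) * t ^ ((M:ℝ) - g₂)) := by
    rw [hNfilter]
    calc ∑ j ∈ Finset.univ.filter (fun i => v i < M), ((M:ℝ) - v j) * t ^ (v j : ℝ)
        ≤ ∑ _j ∈ Finset.univ.filter (fun i => v i < M), (g₂:ℝ) * t ^ ((M:ℝ) - g₂) :=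
          Finset.sum_le_sum fun j hj => key j (Finset.mem_filter.mp hj).2
      _ = (k:ℝ) * ((g₂:ℝ) * t ^ ((M:ℝ) - g₂)) := by rw [Finset.sum_const, hk, nsmul_eq_mul]
  -- bound T from below
  have hTge : (μ:ℝ) * t ^ ((M:ℝ)) ≤ T := by
    have hsub : (Finset.univ.filter (fun i => v i = M)) ⊆ Finset.univ := Finset.filter_subset _ _
    calc (μ:ℝ) * t ^ ((M:ℝ))
        = ∑ _j ∈ Finset.univ.filter (fun i => v i = M), t ^ ((M:ℝ)) := by
          rw [Finset.sum_const, hμ, nsmul_eq_mul]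
      _ = ∑ j ∈ Finset.univ.filter (fun i => v i = M), t ^ ((v j : ℝ)) := by
          apply Finset.sum_congr rfl
          intro j hj
          rw [(Finset.mem_filter.mp hj).2]
      _ ≤ T := Finset.sum_le_sum_of_subset_of_nonneg hsub
            (fun j _ _ => (Real.rpow_pos_of_pos ht0 _).le)
  -- the rpow inequality from ht
  have hApos : (0:ℝ) < ((n:ℝ) - μ) * (g₂:ℝ) / (δ * μ) := by
    have hkR1 : (1:ℝ) ≤ (k:ℝ) := by exact_mod_cast hkpos
    have : (0:ℝ) < (n:ℝ) - μ := by rw [← hkR]; linarith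
    positivity
  have hpow : ((n:ℝ) - μ) * (g₂:ℝ) / (δ * μ) < t ^ ((g₂:ℝ)) := by
    set A := ((n:ℝ) - μ) * (g₂:ℝ) / (δ * μ) with hA
    have h1 : (A ^ (1 / (g₂:ℝ))) ^ ((g₂:ℝ)) < t ^ ((g₂:ℝ)) :=
      Real.rpow_lt_rpow (Real.rpow_nonneg hApos.le _) ht hg₂R
    have h2 : (A ^ (1 / (g₂:ℝ))) ^ ((g₂:ℝ)) = A := by
      rw [← Real.rpow_mul hApos.le, one_div, inv_mul_cancel₀ (ne_of_gt hg₂R), Real.rpow_one]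
    rwa [h2] at h1
  -- main chain
  have hmain : N < δ * T := by
    have hsplit : t ^ ((M:ℝ)) = t ^ ((M:ℝ) - g₂) * t ^ ((g₂:ℝ)) := by
      rw [← Real.rpow_add ht0]; ring_nf
    have hp : (0:ℝ) < t ^ ((M:ℝ) - g₂) := Real.rpow_pos_of_pos ht0 _
    have h3 : (k:ℝ) * ((g₂:ℝ) * t ^ ((M:ℝ) - g₂)) < δ * ((μ:ℝ) * t ^ ((M:ℝ))) := by
      rw [hsplit, hkR]
      have := mul_lt_mul_of_pos_left hpow (mul_pos hδ hμR)
      have hne : δ * (μ:ℝ) ≠ 0 := by positivity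
      rw [mul_div_assoc] at this
      calc ((n:ℝ) - μ) * ((g₂:ℝ) * t ^ ((M:ℝ) - g₂))
          = (δ * μ) * (((n:ℝ) - μ) * g₂ / (δ * μ)) * t ^ ((M:ℝ) - g₂) := by
            field_simp
        _ < (δ * μ) * t ^ ((g₂:ℝ)) * t ^ ((M:ℝ) - g₂) := by
            apply mul_lt_mul_of_pos_right _ hp
            exact mul_lt_mul_of_pos_left hpow (by positivity)
        _ = δ * ((μ:ℝ) * (t ^ ((M:ℝ) - g₂) * t ^ ((g₂:ℝ)))) := by ring
    calc N ≤ (k:ℝ) * ((g₂:ℝ) * t ^ ((M:ℝ) - g₂)) := hNle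
      _ < δ * ((μ:ℝ) * t ^ ((M:ℝ))) := h3
      _ ≤ δ * T := mul_le_mul_of_nonneg_left hTge hδ.le
  -- conclude
  have hform : (M:ℝ) - S / T = N / T := by
    rw [hNeq]
    field_simp
  constructor
  · rw [hform]
    positivity
  · rw [hform]
    rw [div_lt_iff₀ hTpos]
    exact hmain
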